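/- Type soundness (consistency): if ∅ ⊢ S is derivable in the pacing type system, then S is consistent: for every input map ρ_in there exists an output map ρ_out with (ρ_in, ρ_out) ∈ ⟦S⟧. -/

import Mathlib

/-- Streams of optional integer values. -/
def RStream : Type := ℕ → Option ℤ

/-- `w₁` is less defined than `w₂`. -/
def LessDef (w₁ w₂ : RStream) : Prop := ∀ n, w₁ n = none ∨ w₁ n = w₂ n

/-- Last defined value of `w` at or before `n`. -/
def Last (w : RStream) : ℕ → Option ℤ
  | 0 => w 0
  | n+1 => match w (n+1) with
    | some v => some v
    | none => Last w n

/-- Semantics of hold accesses. -/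
def Hold (w : RStream) (n : ℕ) (v : Option ℤ) : Option ℤ :=
  match Last w n with
  | some u => some u
  | none => v

/-- Semantics of prev accesses. -/
def Prev (w : RStream) (n : ℕ) (v : Option ℤ) : Option ℤ :=
  match w n, n with
  | none, _ => none
  | some _, 0 => v
  | some _, m+1 =>
    match Last w m with
    | some u => some u
    | none => v

/-- Pacing annotations: positive boolean formulas over input variables. -/
inductive Pacing (Vi : Type) where
  | pvar (x : Vi)
  | top
  | pand (τ₁ τ₂ : Pacing Vi)
  | por (τ₁ τ₂ : Pacing Vi)

/-- Denotation of pacing annotations as sets of time points. -/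
def PacingDen {Vi : Type} (ρi : Vi → RStream) : Pacing Vi → Set ℕ
  | .pvar x => {n | ρi x n ≠ none}
  | .top => Set.univ
  | .pand τ₁ τ₂ => PacingDen ρi τ₁ ∩ PacingDen ρi τ₂
  | .por τ₁ τ₂ => PacingDen ρi τ₁ ∪ PacingDen ρi τ₂

/-- Semantic refinement of pacing annotations. -/
def Refines {Vi : Type} (τ τ' : Pacing Vi) : Prop :=
  ∀ ρi : Vi → RStream, PacingDen ρi τ ⊆ PacingDen ρi τ'

/-- The set of τ-well-paced streams. -/
def WellPaced {Vi : Type} (τ : Pacing Vi) (ρi : Vi → RStream) : Set RStream :=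
  {w | ∀ n, n ∈ PacingDen ρi τ ↔ w n ≠ none}

/-- Stream expressions over input variables `Vi` and output variables `Vo`. -/
inductive Expr (Vi Vo : Type) where
  | const (v : ℤ)
  | varIn (x : Vi)
  | varOut (x : Vo)
  | prevIn (x : Vi) (e : Expr Vi Vo)
  | prevOut (x : Vo) (e : Expr Vi Vo)
  | holdIn (x : Vi) (e : Expr Vi Vo)
  | holdOut (x : Vo) (e : Expr Vi Vo)
  | add (e₁ e₂ : Expr Vi Vo)

/-- Addition propagating undefinedness. -/
def addOpt : Option ℤ → Option ℤ → Option ℤ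
  | some a, some b => some (a + b)
  | _, _ => none

/-- Total denotational semantics of stream expressions. -/
def ExprDen {Vi Vo : Type} (ρi : Vi → RStream) (ρo : Vo → RStream) : Expr Vi Vo → RStream
  | .const v => fun _ => some v
  | .varIn x => ρi x
  | .varOut x => ρo x
  | .prevIn x e => fun n => Prev (ρi x) n (ExprDen ρi ρo e n)
  | .prevOut x e => fun n => Prev (ρo x) n (ExprDen ρi ρo e n)
  | .holdIn x e => fun n => Hold (ρi x) n (ExprDen ρi ρo e n)
  | .holdOut x e => fun n => Hold (ρo x) n (ExprDen ρi ρo e n)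
  | .add e₁ e₂ => fun n => addOpt (ExprDen ρi ρo e₁ n) (ExprDen ρi ρo e₂ n)

/-- A partial output stream, viewed as a stream (undefined entries are the always-none stream). -/
def getStream (o : Option RStream) : RStream := o.getD (fun _ => none)

/-- Partial semantics of stream expressions w.r.t. a partial output map. -/
def PExprDen {Vi Vo : Type} (ρi : Vi → RStream) (ρo : Vo → Option RStream) : Expr Vi Vo → RStream
  | .const v => fun _ => some v
  | .varIn x => ρi x
  | .varOut x => getStream (ρo x)
  | .prevIn x e => fun n => Prev (ρi x) n (PExprDen ρi ρo e n)
  | .prevOut x e => fun n => Prev (getStream (ρo x)) n (PExprDen ρi ρo e n)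
  | .holdIn x e => fun n => Hold (ρi x) n (PExprDen ρi ρo e n)
  | .holdOut x e => fun n => Hold (getStream (ρo x)) n (PExprDen ρi ρo e n)
  | .add e₁ e₂ => fun n => addOpt (PExprDen ρi ρo e₁ n) (PExprDen ρi ρo e₂ n)

/-- Totalization of a partial output map by a total one. -/
def totalize {Vo : Type} (ρ₁ : Vo → Option RStream) (ρ₂ : Vo → RStream) : Vo → RStream :=
  fun x => (ρ₁ x).getD (ρ₂ x)

/-- An annotated stream equation `x @ τ := e`. -/
structure Equ (Vi Vo : Type) where
  out : Vo
  pac : Pacing Vi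
  expr : Expr Vi Vo

/-- Satisfaction of a single equation. -/
def SatEq {Vi Vo : Type} (eq : Equ Vi Vo) (ρi : Vi → RStream) (ρo : Vo → RStream) : Prop :=
  ρo eq.out ∈ WellPaced eq.pac ρi ∧ LessDef (ρo eq.out) (ExprDen ρi ρo eq.expr)

/-- Satisfaction of a specification (a list of equations). -/
def SatSpec {Vi Vo : Type} (S : List (Equ Vi Vo)) (ρi : Vi → RStream) (ρo : Vo → RStream) : Prop :=
  ∀ eq ∈ S, SatEq eq ρi ρo

/-- Consistency: every input map admits a satisfying output map. -/
def Consistent {Vi Vo : Type} (S : List (Equ Vi Vo)) : Prop :=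
  ∀ ρi : Vi → RStream, ∃ ρo : Vo → RStream, SatSpec S ρi ρo

/-- Typing contexts. -/
def Ctx (Vi Vo : Type) : Type := Vo → Option (Pacing Vi)

/-- Interpretation of typing contexts as sets of partial output maps. -/
def InCtx {Vi Vo : Type} (Γ : Ctx Vi Vo) (ρi : Vi → RStream) (ρo : Vo → Option RStream) : Prop :=
  ∀ x, (Γ x = none ∧ ρo x = none) ∨
    ∃ τ w, Γ x = some τ ∧ ρo x = some w ∧ w ∈ WellPaced τ ρi

/-- Typing rules for expressions. -/
inductive HasTy {Vi Vo : Type} (Γ : Ctx Vi Vo) : Expr Vi Vo → Pacing Vi → Prop where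
  | const {v : ℤ} {τ} : HasTy Γ (.const v) τ
  | binop {e₁ e₂ τ} : HasTy Γ e₁ τ → HasTy Γ e₂ τ → HasTy Γ (.add e₁ e₂) τ
  | directOut {x τcan τ} : Γ x = some τcan → Refines τ τcan → HasTy Γ (.varOut x) τ
  | directIn {x τ} : Refines τ (.pvar x) → HasTy Γ (.varIn x) τ
  | prevOut {x τcan e τ} : Γ x = some τcan → HasTy Γ e τ → Refines τ τcan →
      HasTy Γ (.prevOut x e) τ
  | prevIn {x e τ} : HasTy Γ e τ → Refines τ (.pvar x) → HasTy Γ (.prevIn x e) τ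
  | holdOut {x e τ} : (Γ x).isSome → HasTy Γ e τ → HasTy Γ (.holdOut x e) τ
  | holdIn {x e τ} : HasTy Γ e τ → HasTy Γ (.holdIn x e) τ

/-- Typing rules for specifications. -/
inductive SpecTy {Vi Vo : Type} [DecidableEq Vo] : Ctx Vi Vo → List (Equ Vi Vo) → Prop where
  | empty {Γ} : SpecTy Γ []
  | equation {Γ x τ e S} : Γ x = none → HasTy Γ e τ →
      SpecTy (Function.update Γ x (some τ)) S → SpecTy Γ (⟨x, τ, e⟩ :: S)

/-- Semantic typing of expressions. -/
def SemTyExpr {Vi Vo : Type} (Γ : Ctx Vi Vo) (e : Expr Vi Vo) (τ : Pacing Vi) : Prop :=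
  ∀ (ρi : Vi → RStream) (ρo : Vo → Option RStream), InCtx Γ ρi ρo →
    ∀ n ∈ PacingDen ρi τ, PExprDen ρi ρo e n ≠ none

/-- Semantic typing of specifications. -/
def SemTySpec {Vi Vo : Type} (Γ : Ctx Vi Vo) (S : List (Equ Vi Vo)) : Prop :=
  ∀ (ρi : Vi → RStream) (ρ₁ : Vo → Option RStream), InCtx Γ ρi ρ₁ →
    ∃ ρ₂ : Vo → RStream, SatSpec S ρi (totalize ρ₁ ρ₂)

section Aux
variable {Vi Vo : Type}

lemma hasTy_ne_none {Γ : Ctx Vi Vo} {e : Expr Vi Vo} {τ : Pacing Vi} (h : HasTy Γ e τ) :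
    ∀ (ρi : Vi → RStream) (ρo : Vo → Option RStream), InCtx Γ ρi ρo →
      ∀ n ∈ PacingDen ρi τ, PExprDen ρi ρo e n ≠ none := by
  induction h with
  | const => intro ρi ρo _ n _; simp [PExprDen]
  | binop h1 h2 ih1 ih2 =>
    intro ρi ρo hc n hn
    have := ih1 ρi ρo hc n hn
    have := ih2 ρi ρo hc n hn
    simp only [PExprDen, addOpt]
    cases hx : PExprDen ρi ρo _ n <;> cases hy : PExprDen ρi ρo _ n <;> simp_all [addOpt]
  | directOut hΓ href =>
    intro ρi ρo hc n hn
    rcases hc _ with ⟨h1, _⟩ | ⟨τ', w, hΓ', hρ, hwp⟩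
    · rw [hΓ] at h1; exact absurd h1 (by simp)
    · rw [hΓ] at hΓ'; injection hΓ' with hττ; subst hττ
      simp only [PExprDen, hρ]; exact (hwp n).1 (href ρi hn)
  | directIn href =>
    intro ρi ρo _ n hn
    exact href ρi hn
  | @prevOut x τcan e τ hΓ hty href ih =>
    intro ρi ρo hc n hn
    rcases hc x with ⟨h1, _⟩ | ⟨τ', w, hΓ', hρ, hwp⟩
    · rw [hΓ] at h1; exact absurd h1 (by simp)
    · rw [hΓ] at hΓ'; injection hΓ' with hττ; subst hττ
      have hv := ih ρi ρo hc n hn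
      have hwn : w n ≠ none := (hwp n).1 (href ρi hn)
      have hg : getStream (ρo x) = w := by rw [hρ]; rfl
      simp only [PExprDen, Prev, hg]
      cases hwn' : w n with
      | none => exact absurd hwn' hwn
      | some u =>
        cases n with
        | zero => exact hv
        | succ m => cases hL : Last w m <;> simp [hL, hv]
  | @prevIn x e τ hty href ih =>
    intro ρi ρo hc n hn
    have hv := ih ρi ρo hc n hn
    have hwn : ρi x n ≠ none := href ρi hn
    simp only [PExprDen, Prev]
    cases hwn' : ρi x n with
    | none => exact absurd hwn' hwn
    | some u =>
      cases n with
      | zero => exact hv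
      | succ m => cases hL : Last (ρi x) m <;> simp [hL, hv]
  | holdOut hΓ hty ih =>
    intro ρi ρo hc n hn
    have hv := ih ρi ρo hc n hn
    simp only [PExprDen, Hold]
    cases hL : Last (getStream _) n <;> simp [hL, hv]
  | holdIn hty ih =>
    intro ρi ρo hc n hn
    have hv := ih ρi ρo hc n hn
    simp only [PExprDen, Hold]
    cases hL : Last _ n <;> simp [hL, hv]

lemma pexprDen_agree {Γ : Ctx Vi Vo} {e : Expr Vi Vo} {τ : Pacing Vi} (h : HasTy Γ e τ)
    (ρi : Vi → RStream) {ρa ρb : Vo → Option RStream}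
    (hag : ∀ y, (Γ y).isSome → ρa y = ρb y) :
    PExprDen ρi ρa e = PExprDen ρi ρb e := by
  induction h with
  | const => rfl
  | binop h1 h2 ih1 ih2 => simp only [PExprDen, ih1, ih2]; rfl
  | @directOut x τcan τ' hΓ href =>
    simp only [PExprDen, hag x (by simp [hΓ])]
  | directIn _ => rfl
  | @prevOut x τcan e' τ' hΓ hty href ih =>
    funext n; simp only [PExprDen, hag x (by simp [hΓ]), ih]
  | prevIn hty href ih => funext n; simp only [PExprDen, ih]
  | @holdOut x e' τ' hΓ hty ih =>
    funext n; simp only [PExprDen, hag x hΓ, ih]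
  | holdIn hty ih => funext n; simp only [PExprDen, ih]

lemma exprDen_totalize {Γ : Ctx Vi Vo} {e : Expr Vi Vo} {τ : Pacing Vi} (h : HasTy Γ e τ)
    {ρi : Vi → RStream} {ρ₁ : Vo → Option RStream} (hc : InCtx Γ ρi ρ₁) (ρ₂ : Vo → RStream) :
    ExprDen ρi (totalize ρ₁ ρ₂) e = PExprDen ρi ρ₁ e := by
  have key : ∀ x : Vo, (Γ x).isSome → totalize ρ₁ ρ₂ x = getStream (ρ₁ x) := by
    intro x hx
    rcases hc x with ⟨h1, _⟩ | ⟨τ', w, hΓ', hρ, _⟩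
    · rw [h1] at hx; simp at hx
    · simp [totalize, getStream, hρ]; rfl
  induction h with
  | const => rfl
  | binop h1 h2 ih1 ih2 => simp only [ExprDen, PExprDen, ih1, ih2]; rfl
  | @directOut x τcan τ' hΓ href =>
    simp only [ExprDen, PExprDen, key x (by simp [hΓ])]
  | directIn _ => rfl
  | @prevOut x τcan e' τ' hΓ hty href ih =>
    funext n; simp only [ExprDen, PExprDen, key x (by simp [hΓ]), ih]
  | prevIn hty href ih => funext n; simp only [ExprDen, PExprDen, ih]
  | @holdOut x e' τ' hΓ hty ih =>
    funext n; simp only [ExprDen, PExprDen, key x hΓ, ih]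
  | holdIn hty ih => funext n; simp only [ExprDen, PExprDen, ih]

lemma specTy_semTy [DecidableEq Vo] {Γ : Ctx Vi Vo} {S : List (Equ Vi Vo)}
    (h : SpecTy Γ S) : SemTySpec Γ S := by
  induction h with
  | empty =>
    intro ρi ρ₁ _
    exact ⟨fun _ _ => none, fun eq hm => absurd hm List.not_mem_nil⟩
  | @equation Γ x τ e S hΓx hty hS ih =>
    intro ρi ρ₁ hctx
    classical
    set w : RStream := fun n => if n ∈ PacingDen ρi τ then PExprDen ρi ρ₁ e n else none with hw
    have hwp : w ∈ WellPaced τ ρi := by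
      intro n
      constructor
      · intro hn
        simp only [hw, if_pos hn]
        exact hasTy_ne_none hty ρi ρ₁ hctx n hn
      · intro hn
        by_contra hmem
        simp [hw, if_neg hmem] at hn
    set ρ₁' : Vo → Option RStream := Function.update ρ₁ x (some w) with hρ₁'
    have hρ₁x : ρ₁ x = none := by
      rcases hctx x with ⟨_, h2⟩ | ⟨τ', _, hΓ', _, _⟩
      · exact h2
      · rw [hΓx] at hΓ'; exact absurd hΓ' (by simp)
    have hctx' : InCtx (Function.update Γ x (some τ)) ρi ρ₁' := by
      intro y
      by_cases hy : y = x
      · subst hy; right; exact ⟨τ, w, Function.update_self y (some τ) Γ, by simp [hρ₁'], hwp⟩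
      · rcases hctx y with ⟨h1, h2⟩ | ⟨τ', w', hΓ', hρ, hwp'⟩
        · left; exact ⟨(Function.update_of_ne hy _ _).trans h1, (Function.update_of_ne hy _ _).trans h2⟩
        · right; exact ⟨τ', w', (Function.update_of_ne hy _ _).trans hΓ',
            by simp [hρ₁', Function.update_of_ne hy, hρ], hwp'⟩
    obtain ⟨ρ₂, hsat⟩ := ih ρi ρ₁' hctx'
    refine ⟨Function.update ρ₂ x w, ?_⟩
    have htot : totalize ρ₁ (Function.update ρ₂ x w) = totalize ρ₁' ρ₂ := by
      funext y
      by_cases hy : y = x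
      · subst hy; simp [totalize, hρ₁x, hρ₁']
      · simp [totalize, hρ₁', Function.update_of_ne hy]
    rw [htot]
    intro eq hmem
    rcases List.mem_cons.1 hmem with heq | hmem'
    · subst heq
      have hox : totalize ρ₁' ρ₂ x = w := by simp [totalize, hρ₁']
      constructor
      · simpa [SatEq, hox] using hwp
      · intro n
        simp only [hox]
        by_cases hn : n ∈ PacingDen ρi τ
        · right
          rw [← htot, exprDen_totalize hty hctx]
          simp [hw, if_pos hn]
        · left; simp [hw, if_neg hn]
    · exact hsat eq hmem'

end Aux

theorem type_soundness {Vi Vo : Type} [DecidableEq Vo] (S : List (Equ Vi Vo))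
    (h : SpecTy (fun _ => none : Ctx Vi Vo) S) : Consistent S := by
  intro ρi
  have hctx : InCtx (fun _ => none : Ctx Vi Vo) ρi (fun _ => none) :=
    fun x => Or.inl ⟨rfl, rfl⟩
  obtain ⟨ρ₂, hs⟩ := specTy_semTy h ρi (fun _ => none) hctx
  exact ⟨_, hs⟩
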